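/- Suppose r₁, ṙ₁, r₂, ṙ₂ ∈ ℝ³, μ > 0, r₁ ≠ 0, r₂ ≠ 0, z ∈ ℝ, satisfy: r₁ × ṙ₁ = r₂ × ṙ₂, (|ṙ₁|² − μ/|r₁|) r₁ − (ṙ₁·r₁) ṙ₁ = (|ṙ₂|² − z) r₂ − (ṙ₂·r₂) ṙ₂, and ½|ṙ₁|² − μ/|r₁| = ½|ṙ₂|² − z. Then z²|r₂|² = μ². -/

import Mathlib

open Matrix

noncomputable def norm3 (v : Fin 3 → ℝ) : ℝ := Real.sqrt (v ⬝ᵥ v)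

theorem aux_var_constraint (r₁ v₁ r₂ v₂ : Fin 3 → ℝ) (μ z : ℝ) (hμ : 0 < μ)
    (hr₁ : r₁ ≠ 0) (hr₂ : r₂ ≠ 0)
    (hc : crossProduct r₁ v₁ = crossProduct r₂ v₂)
    (hL : (v₁ ⬝ᵥ v₁ - μ / norm3 r₁) • r₁ - (v₁ ⬝ᵥ r₁) • v₁
        = (v₂ ⬝ᵥ v₂ - z) • r₂ - (v₂ ⬝ᵥ r₂) • v₂)
    (hE : (1 / 2) * (v₁ ⬝ᵥ v₁) - μ / norm3 r₁ = (1 / 2) * (v₂ ⬝ᵥ v₂) - z) :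
    z ^ 2 * (r₂ ⬝ᵥ r₂) = μ ^ 2 := by
  have hS : ((v₁ ⬝ᵥ v₁ - μ / norm3 r₁) • r₁ - (v₁ ⬝ᵥ r₁) • v₁) ⬝ᵥ
      ((v₁ ⬝ᵥ v₁ - μ / norm3 r₁) • r₁ - (v₁ ⬝ᵥ r₁) • v₁)
      = ((v₂ ⬝ᵥ v₂ - z) • r₂ - (v₂ ⬝ᵥ r₂) • v₂) ⬝ᵥ
        ((v₂ ⬝ᵥ v₂ - z) • r₂ - (v₂ ⬝ᵥ r₂) • v₂) := by rw [hL]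
  simp only [dotProduct_sub, sub_dotProduct, smul_dotProduct, dotProduct_smul,
    smul_eq_mul, dotProduct_comm v₁ r₁, dotProduct_comm v₂ r₂] at hS
  -- Lagrange identity from conservation of angular momentum
  have hH : (r₁ ⬝ᵥ r₁) * (v₁ ⬝ᵥ v₁) - (r₁ ⬝ᵥ v₁) ^ 2
      = (r₂ ⬝ᵥ r₂) * (v₂ ⬝ᵥ v₂) - (r₂ ⬝ᵥ v₂) ^ 2 := by
    have h := congrArg (fun w => w ⬝ᵥ w) hc
    simp only [cross_apply, dotProduct, Fin.sum_univ_three, cons_val_zero, cons_val_one,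
      head_cons, cons_val_two, tail_cons] at h ⊢
    linear_combination h
  -- the norm
  have hRpos : 0 < r₁ ⬝ᵥ r₁ := by
    have h0 : ∀ w : Fin 3 → ℝ, 0 ≤ w ⬝ᵥ w := fun w =>
      Finset.sum_nonneg fun i _ => mul_self_nonneg (w i)
    rcases (h0 r₁).lt_or_eq with h | h
    · exact h
    · exfalso; apply hr₁; funext i
      have := Finset.sum_eq_zero_iff_of_nonneg
        (fun j (_ : j ∈ Finset.univ) => mul_self_nonneg (r₁ j)) |>.mp h.symm i (by simp)
      exact mul_self_eq_zero.mp this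
  have hn0 : 0 < norm3 r₁ := Real.sqrt_pos.mpr hRpos
  have hn2 : norm3 r₁ ^ 2 = r₁ ⬝ᵥ r₁ := Real.sq_sqrt hRpos.le
  set n := norm3 r₁
  set w := μ / n with hw
  have hμw : μ ^ 2 = w ^ 2 * (r₁ ⬝ᵥ r₁) := by
    rw [← hn2, hw]; field_simp
  have h3 : (v₁ ⬝ᵥ v₁) - 2 * w = (v₂ ⬝ᵥ v₂) - 2 * z := by linarith
  rw [hμw]
  linear_combination (-1) * hS + ((v₂ ⬝ᵥ v₂) - 2 * z) * hH
    + ((r₁ ⬝ᵥ r₁) * (v₁ ⬝ᵥ v₁) - (r₁ ⬝ᵥ v₁) ^ 2) * h3
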